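/- Let k ≥ 1 and let w be a word as in the block structure above (concatenation of blocks b·1⋯k·d^{e}·k⋯1, ending with b·1⋯k·d^{e}, e ≥ 1 at the end). Suppose M is a non-crossing perfect matching on the positions of w. Then M contains a matched pair of adjacent positions whose letters form one of the unordered pairs {b,1}, {i,i+1} (1 ≤ i ≤ k−1), {k,d}, {d,d}, or {k,k}. -/

import Mathlib

/-- The alphabet `{b, d} ∪ {1, …, k}`: two extra symbols plus `Fin k`. -/
abbrev Alph (k : ℕ) := Sum (Fin 2) (Fin k)

/-- The letter `b`. -/
def bS {k : ℕ} : Alph k := Sum.inl 0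

/-- The letter `d`. -/
def dS {k : ℕ} : Alph k := Sum.inl 1

/-- The ascending run `1·2⋯k`. -/
def ascL (k : ℕ) : List (Alph k) := (List.finRange k).map Sum.inr

/-- An intermediate block `b·1·2⋯k·d^e·k⋯2·1`. -/
def blockL (k e : ℕ) : List (Alph k) :=
  bS :: (ascL k ++ List.replicate e dS ++ (ascL k).reverse)

/-- The final block `b·1·2⋯k·d^e`. -/
def lastBlockL (k e : ℕ) : List (Alph k) :=
  bS :: (ascL k ++ List.replicate e dS)

/-- The block word: intermediate blocks with `d`-run lengths given by `es`,
followed by a final block with `d`-run length `e`. -/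
def blockWord (k : ℕ) (es : List ℕ) (e : ℕ) : List (Alph k) :=
  (es.map (blockL k)).flatten ++ lastBlockL k e

/-- The allowed unordered pairs of letters:
`{b,1}`, `{i,i+1}`, `{k,d}`, `{d,d}`, `{k,k}`. -/
def AllowedPair (k : ℕ) (x y : Alph k) : Prop :=
  (∃ i : Fin k, (i : ℕ) = 0 ∧ ({x, y} : Set (Alph k)) = {bS, Sum.inr i}) ∨
  (∃ i j : Fin k, (j : ℕ) = (i : ℕ) + 1 ∧
    ({x, y} : Set (Alph k)) = {Sum.inr i, Sum.inr j}) ∨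
  (∃ i : Fin k, (i : ℕ) = k - 1 ∧ ({x, y} : Set (Alph k)) = {Sum.inr i, dS}) ∨
  (x = dS ∧ y = dS) ∨
  (∃ i : Fin k, (i : ℕ) = k - 1 ∧ x = Sum.inr i ∧ y = Sum.inr i)

/-- A matching on linearly ordered positions is non-crossing. -/
def NoncrossL {n : ℕ} (f : Fin n → Fin n) : Prop :=
  ¬ ∃ a b : Fin n, a < b ∧ b < f a ∧ f a < f b

-- auxiliary

lemma allowed_symm {k : ℕ} {x y : Alph k} (h : AllowedPair k x y) : AllowedPair k y x := by
  unfold AllowedPair at h ⊢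
  rcases h with ⟨i,hi,hs⟩|⟨i,j,hij,hs⟩|⟨i,hi,hs⟩|⟨h1,h2⟩|⟨i,hi,h1,h2⟩
  · exact Or.inl ⟨i, hi, by rw [Set.pair_comm y x]; exact hs⟩
  · exact Or.inr (Or.inl ⟨i, j, hij, by rw [Set.pair_comm y x]; exact hs⟩)
  · exact Or.inr (Or.inr (Or.inl ⟨i, hi, by rw [Set.pair_comm y x]; exact hs⟩))
  · exact Or.inr (Or.inr (Or.inr (Or.inl ⟨h2, h1⟩)))
  · exact Or.inr (Or.inr (Or.inr (Or.inr ⟨i, hi, h2, h1⟩)))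

lemma ascL_length (k : ℕ) : (ascL k).length = k := by simp [ascL]

lemma ascL_get (k : ℕ) {i : ℕ} (h : i < (ascL k).length) :
    (ascL k).get ⟨i, h⟩ = Sum.inr ⟨i, by simpa [ascL] using h⟩ := by
  simp [ascL]

lemma chain_asc (k : ℕ) : List.Chain' (AllowedPair k) (ascL k) := by
  unfold List.Chain'
  rw [List.isChain_iff_getElem]
  intro i h
  rw [show (ascL k)[i] = (ascL k).get ⟨i, by omega⟩ from rfl,
    show (ascL k)[i + 1] = (ascL k).get ⟨i + 1, h⟩ from rfl, ascL_get, ascL_get]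
  have hik : i + 1 < k := by rw [ascL_length] at h; omega
  exact Or.inr (Or.inl ⟨⟨i, by omega⟩, ⟨i+1, by omega⟩, rfl, rfl⟩)

lemma chain_repl (k e : ℕ) : List.Chain' (AllowedPair k) (List.replicate e (dS : Alph k)) := by
  unfold List.Chain'
  rw [List.isChain_iff_getElem]
  intro i h
  rw [List.getElem_replicate, List.getElem_replicate]
  exact Or.inr (Or.inr (Or.inr (Or.inl ⟨rfl, rfl⟩)))

lemma chain_asc_rev (k : ℕ) : List.Chain' (AllowedPair k) (ascL k).reverse := by
  unfold List.Chain'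
  rw [List.isChain_reverse]
  exact (chain_asc k).imp (fun a b h => allowed_symm h)

lemma ascL_head (k : ℕ) (hk : 1 ≤ k) : (ascL k).head? = some (Sum.inr ⟨0, hk⟩) := by
  have h0 : 0 < (ascL k).length := by rw [ascL_length]; omega
  rw [List.head?_eq_getElem?, List.getElem?_eq_getElem h0]
  have := ascL_get k h0
  simp only [List.get_eq_getElem] at this
  rw [this]

lemma ascL_getLast (k : ℕ) (hk : 1 ≤ k) :
    (ascL k).getLast? = some (Sum.inr ⟨k - 1, by omega⟩) := by
  have h0 : k - 1 < (ascL k).length := by simp [ascL_length]; omega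
  rw [List.getLast?_eq_getElem?, List.getElem?_eq_getElem (by simpa [ascL_length] using h0)]
  have := ascL_get k h0
  simp only [List.get_eq_getElem] at this
  simp [ascL_length, this]

lemma pair_b1 (k : ℕ) (hk : 1 ≤ k) : AllowedPair k bS (Sum.inr ⟨0, hk⟩) :=
  Or.inl ⟨⟨0, hk⟩, rfl, rfl⟩

lemma pair_1b (k : ℕ) (hk : 1 ≤ k) : AllowedPair k (Sum.inr ⟨0, hk⟩) bS :=
  allowed_symm (pair_b1 k hk)

lemma pair_kd (k : ℕ) (hk : 1 ≤ k) : AllowedPair k (Sum.inr ⟨k-1, by omega⟩) dS :=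
  Or.inr (Or.inr (Or.inl ⟨⟨k-1, by omega⟩, rfl, rfl⟩))

lemma pair_dk (k : ℕ) (hk : 1 ≤ k) : AllowedPair k dS (Sum.inr ⟨k-1, by omega⟩) :=
  allowed_symm (pair_kd k hk)

lemma pair_kk (k : ℕ) (hk : 1 ≤ k) :
    AllowedPair k (Sum.inr ⟨k-1, by omega⟩) (Sum.inr ⟨k-1, by omega⟩) :=
  Or.inr (Or.inr (Or.inr (Or.inr ⟨⟨k-1, by omega⟩, rfl, rfl, rfl⟩)))

lemma chain_mid (k e : ℕ) (hk : 1 ≤ k) :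
    List.Chain' (AllowedPair k) (ascL k ++ List.replicate e dS ++ (ascL k).reverse) := by
  rcases Nat.eq_zero_or_pos e with rfl | he
  · simp only [List.replicate_zero, List.append_nil]
    refine List.isChain_append.2 ⟨chain_asc k, chain_asc_rev k, ?_⟩
    intro x hx y hy
    rw [ascL_getLast k hk] at hx
    rw [List.head?_reverse, ascL_getLast k hk] at hy
    simp at hx hy
    subst hx; subst hy
    exact pair_kk k hk
  · refine List.isChain_append.2 ⟨List.isChain_append.2 ⟨chain_asc k, chain_repl k e, ?_⟩,
      chain_asc_rev k, ?_⟩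
    · intro x hx y hy
      rw [ascL_getLast k hk] at hx
      rw [List.head?_replicate] at hy
      simp [he.ne'] at hx hy
      subst hx; subst hy
      exact pair_kd k hk
    · intro x hx y hy
      rw [List.getLast?_append, List.getLast?_replicate] at hx
      rw [List.head?_reverse, ascL_getLast k hk] at hy
      simp [he.ne'] at hx hy
      subst hx; subst hy
      exact pair_dk k hk

lemma chain_blockL (k e : ℕ) (hk : 1 ≤ k) : List.Chain' (AllowedPair k) (blockL k e) := by
  unfold List.Chain'
  rw [blockL, List.isChain_cons]
  refine ⟨?_, chain_mid k e hk⟩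
  intro y hy
  rw [List.append_assoc, List.head?_append, ascL_head k hk] at hy
  simp at hy
  subst hy
  exact pair_b1 k hk

lemma chain_lastBlockL (k e : ℕ) (hk : 1 ≤ k) (he : 1 ≤ e) :
    List.Chain' (AllowedPair k) (lastBlockL k e) := by
  unfold List.Chain'
  rw [lastBlockL, List.isChain_cons]
  constructor
  · intro y hy
    rw [List.head?_append, ascL_head k hk] at hy
    simp at hy
    subst hy
    exact pair_b1 k hk
  · refine List.isChain_append.2 ⟨chain_asc k, chain_repl k e, ?_⟩
    intro x hx y hy
    rw [ascL_getLast k hk] at hx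
    rw [List.head?_replicate] at hy
    simp [he.trans_lt', Nat.lt_of_lt_of_le Nat.zero_lt_one he |>.ne'] at hx hy
    subst hx; subst hy
    exact pair_kd k hk

lemma blockWord_head (k : ℕ) (es : List ℕ) (e : ℕ) :
    (blockWord k es e).head? = some bS := by
  cases es with
  | nil => simp [blockWord, lastBlockL]
  | cons a es => simp [blockWord, blockL]

lemma blockL_getLast (k e : ℕ) (hk : 1 ≤ k) :
    (blockL k e).getLast? = some (Sum.inr ⟨0, hk⟩) := by
  have hrev : (ascL k).reverse ≠ [] := by simp [ascL]; omega
  rw [blockL]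
  rw [show (bS :: (ascL k ++ List.replicate e dS ++ (ascL k).reverse) : List (Alph k)) =
    (bS :: (ascL k ++ List.replicate e dS)) ++ (ascL k).reverse by simp]
  rw [List.getLast?_append, List.getLast?_reverse, ascL_head k hk]
  simp

lemma chain_blockWord (k : ℕ) (es : List ℕ) (e : ℕ) (hk : 1 ≤ k) (he : 1 ≤ e) :
    List.Chain' (AllowedPair k) (blockWord k es e) := by
  induction es with
  | nil => simpa [blockWord] using chain_lastBlockL k e hk he
  | cons a es ih =>
    have heq : blockWord k (a :: es) e = blockL k a ++ blockWord k es e := by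
      simp [blockWord, List.map_cons, List.flatten_cons, List.append_assoc]
    rw [heq]
    refine List.isChain_append.2 ⟨chain_blockL k a hk, ih, ?_⟩
    intro x hx y hy
    rw [blockL_getLast k a hk] at hx
    rw [blockWord_head] at hy
    simp at hx hy
    subst hx; subst hy
    exact pair_1b k hk

lemma exists_adj {n : ℕ} (hn : 0 < n) (f : Fin n → Fin n) (hinv : Function.Involutive f)
    (hfpf : ∀ x, f x ≠ x) (hnc : NoncrossL f) :
    ∃ p : Fin n, (f p : ℕ) = (p : ℕ) + 1 := by
  have hinj : Function.Injective f := hinv.injective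
  set s : Finset (Fin n) := Finset.univ.filter (fun a : Fin n => a < f a) with hs
  have hne : s.Nonempty := by
    refine ⟨⟨0, hn⟩, ?_⟩
    simp only [hs, Finset.mem_filter, Finset.mem_univ, true_and]
    have hne0 : (f ⟨0, hn⟩ : ℕ) ≠ 0 := fun h => (hfpf ⟨0, hn⟩) (Fin.ext h)
    rw [Fin.lt_def, Fin.val_mk]
    omega
  obtain ⟨a, ha, hmin⟩ := s.exists_min_image (fun a => (f a : ℕ) - (a : ℕ)) hne
  have haf : (a : ℕ) < (f a : ℕ) := by
    simpa only [hs, Finset.mem_filter, Finset.mem_univ, true_and, Fin.lt_def] using ha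
  by_contra hno
  push_neg at hno
  have hne1 : (f a : ℕ) ≠ (a : ℕ) + 1 := hno a
  have hlt : (a : ℕ) + 1 < (f a : ℕ) := by omega
  obtain ⟨b, hbval⟩ : ∃ b : Fin n, (b : ℕ) = (a : ℕ) + 1 :=
    ⟨⟨(a : ℕ) + 1, lt_trans hlt (f a).isLt⟩, rfl⟩
  have hab : a < b := Fin.lt_def.mpr (by omega)
  have hbfa : b < f a := Fin.lt_def.mpr (by omega)
  have hfb_ne : f b ≠ f a := fun h => by
    have := hinj h; rw [this] at hab; exact lt_irrefl _ hab
  have hfb_lt : f b < f a := by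
    rcases lt_or_ge (f a) (f b) with h | h
    · exact absurd ⟨a, b, hab, hbfa, h⟩ hnc
    · exact lt_of_le_of_ne h hfb_ne
  have hfb_lt' : (f b : ℕ) < (f a : ℕ) := Fin.lt_def.mp hfb_lt
  rcases lt_trichotomy b (f b) with h1 | h1 | h1
  · have hbs : b ∈ s := by
      simp only [hs, Finset.mem_filter, Finset.mem_univ, true_and]; exact h1
    have hm := hmin b hbs
    have h1' : (b : ℕ) < (f b : ℕ) := Fin.lt_def.mp h1
    omega
  · exact (hfpf b) h1.symm
  · have hfb_ne_a : f b ≠ a := fun h => by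
      have hfa : f a = b := by rw [← h, hinv]
      rw [hfa] at hbfa; exact lt_irrefl _ hbfa
    have hfba : f b < a := by
      have h1' : (f b : ℕ) < (b : ℕ) := Fin.lt_def.mp h1
      have : (f b : ℕ) ≠ (a : ℕ) := fun h => hfb_ne_a (Fin.ext h)
      rw [Fin.lt_def]
      omega
    refine hnc ⟨f b, a, hfba, ?_, ?_⟩
    · rw [hinv]; exact hab
    · rw [hinv]; exact hbfa

/-- Any non-crossing perfect matching on the positions of a block word contains a
matched pair of adjacent positions whose letters form one of the allowed pairs
`{b,1}`, `{i,i+1}`, `{k,d}`, `{d,d}`, `{k,k}`. -/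
theorem blockWord_matching_has_allowed_adjacent_pair (k : ℕ) (hk : 1 ≤ k)
    (es : List ℕ) (e : ℕ) (he : 1 ≤ e)
    (f : Fin (blockWord k es e).length → Fin (blockWord k es e).length)
    (hinv : Function.Involutive f) (hfpf : ∀ x, f x ≠ x) (hnc : NoncrossL f) :
    ∃ p : Fin (blockWord k es e).length,
      (f p : ℕ) = (p : ℕ) + 1 ∧
      AllowedPair k ((blockWord k es e).get p) ((blockWord k es e).get (f p)) := by
  have hn : 0 < (blockWord k es e).length := by simp [blockWord, lastBlockL]
  obtain ⟨p, hp⟩ := exists_adj hn f hinv hfpf hnc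
  refine ⟨p, hp, ?_⟩
  have hchain := chain_blockWord k es e hk he
  unfold List.Chain' at hchain
  rw [List.isChain_iff_getElem] at hchain
  have hplt : (p : ℕ) < (blockWord k es e).length - 1 := by
    have := (f p).isLt
    omega
  have hAP := hchain p (by omega)
  have hfp : f p = ⟨(p : ℕ) + 1, by omega⟩ := Fin.ext hp
  rw [hfp]
  exact hAP
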